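/- Let B = {(x, y) ∈ V ×_N V̇ : x = λ y for some λ ≥ 0}, where τ : V → N is a real vector bundle over a manifold N, V̇ = V \ 0_N is the complement of the zero section, and V ×_N V̇ is the fiber product. Then B is a closed subset of V ×_N V̇, and the map (V̇ × ℝ_{≥0}) → V ×_N V̇ sending (y, λ) ↦ (λy, y) is a homeomorphism onto B. -/

import Mathlib

open Bundle Topology

section aux

variable {F : Type*} [NormedAddCommGroup F] [NormedSpace ℝ F]

lemma aux_norm_char {u v : F} (hv : v ≠ 0) :
    (∃ l : ℝ, 0 ≤ l ∧ u = l • v) ↔ ‖v‖ • u = ‖u‖ • v := by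
  constructor
  · rintro ⟨l, hl, rfl⟩
    rw [norm_smul, Real.norm_of_nonneg hl, smul_smul, mul_comm]
  · intro h
    have hv' : ‖v‖ ≠ 0 := norm_ne_zero_iff.2 hv
    have hu : u = (‖v‖⁻¹ * ‖u‖) • v := by
      rw [mul_smul, ← h, smul_smul, inv_mul_cancel₀ hv', one_smul]
    exact ⟨‖v‖⁻¹ * ‖u‖, by positivity, hu⟩

end aux

section bundle

variable {B : Type*} [TopologicalSpace B] (F : Type*) [NormedAddCommGroup F]
    [NormedSpace ℝ F] (E : B → Type*) [∀ b, AddCommGroup (E b)] [∀ b, Module ℝ (E b)]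
    [∀ b, TopologicalSpace (E b)] [TopologicalSpace (TotalSpace F E)]
    [FiberBundle F E] [VectorBundle ℝ F E]

/-- The fiberwise scalar action on the total space is continuous. -/
lemma continuous_smul_ts :
    Continuous fun p : ℝ × TotalSpace F E =>
      (TotalSpace.mk p.2.proj (p.1 • p.2.snd) : TotalSpace F E) := by
  rw [continuous_iff_continuousAt]
  rintro ⟨l₀, v₀⟩
  rw [FiberBundle.continuousAt_totalSpace]
  refine ⟨((FiberBundle.continuous_proj F E).comp continuous_snd).continuousAt, ?_⟩
  set e := trivializationAt F E v₀.proj with he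
  have hmem : v₀ ∈ e.source := FiberBundle.mem_trivializationAt_proj_source
  have hU : {p : ℝ × TotalSpace F E | p.2 ∈ e.source} ∈ nhds (l₀, v₀) :=
    (e.open_source.preimage continuous_snd).mem_nhds hmem
  have hC : ContinuousAt (fun p : ℝ × TotalSpace F E => p.1 • (e p.2).2) (l₀, v₀) := by
    have h2 : ContinuousAt (fun p : ℝ × TotalSpace F E => (e p.2).2) (l₀, v₀) :=
      ((e.continuousOn.continuousAt (e.open_source.mem_nhds hmem)).comp
        continuous_snd.continuousAt).snd
    exact continuousAt_fst.smul h2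
  refine hC.congr ?_
  filter_upwards [hU] with p hp
  have hb : p.2.proj ∈ e.baseSet := e.mem_source.1 hp
  exact ((e.continuousLinearEquivAt ℝ p.2.proj hb).map_smul p.1 p.2.snd).symm

/-- If `x = l • y` with `l ≥ 0` and `y ≠ 0` then the norm-quotient formula recovers `l`. -/
lemma lfix_spec (e : Trivialization F (π F E)) [e.IsLinear ℝ] {b : B} (hb : b ∈ e.baseSet)
    {x y : E b} (hy : y ≠ 0) {l : ℝ} (hl : 0 ≤ l) (hx : x = l • y) :
    ‖(e (TotalSpace.mk b x)).2‖ / ‖(e (TotalSpace.mk b y)).2‖ = l := by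
  set φ := e.continuousLinearEquivAt ℝ b hb with hφ
  have hex : (e (TotalSpace.mk b x)).2 = φ x := rfl
  have hey : (e (TotalSpace.mk b y)).2 = φ y := rfl
  have hφy : φ y ≠ 0 := by
    simp [φ.map_eq_zero_iff, hy]
  rw [hex, hey, hx, map_smul, norm_smul, Real.norm_of_nonneg hl,
    mul_div_assoc, div_self (norm_ne_zero_iff.2 hφy), mul_one]

/-- Transfer of the "positive ray" condition through a trivialization. -/
lemma ray_iff (e : Trivialization F (π F E)) [e.IsLinear ℝ] {b : B} (hb : b ∈ e.baseSet)
    (x y : E b) :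
    (∃ l : ℝ, 0 ≤ l ∧ x = l • y) ↔
      ∃ l : ℝ, 0 ≤ l ∧ (e (TotalSpace.mk b x)).2 = l • (e (TotalSpace.mk b y)).2 := by
  set φ := e.continuousLinearEquivAt ℝ b hb with hφ
  have hex : (e (TotalSpace.mk b x)).2 = φ x := rfl
  have hey : (e (TotalSpace.mk b y)).2 = φ y := rfl
  rw [hex, hey]
  constructor
  · rintro ⟨l, hl, rfl⟩; exact ⟨l, hl, map_smul φ l y⟩
  · rintro ⟨l, hl, h⟩
    refine ⟨l, hl, φ.injective ?_⟩
    rw [h, map_smul]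

end bundle

section main

variable {B : Type*} [TopologicalSpace B] (F : Type*) [NormedAddCommGroup F]
    [NormedSpace ℝ F] (E : B → Type*) [∀ b, AddCommGroup (E b)] [∀ b, Module ℝ (E b)]
    [∀ b, TopologicalSpace (E b)] [TopologicalSpace (TotalSpace F E)]
    [FiberBundle F E] [VectorBundle ℝ F E]

omit [VectorBundle ℝ F E] in
lemma triv_snd_ne (e : Trivialization F (π F E)) [e.IsLinear ℝ] {b : B} (hb : b ∈ e.baseSet)
    {y : E b} (hy : y ≠ 0) : (e (TotalSpace.mk b y)).2 ≠ 0 := by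
  have h : (e (TotalSpace.mk b y)).2 = e.continuousLinearEquivAt ℝ b hb y := rfl
  rw [h, ne_eq, (e.continuousLinearEquivAt ℝ b hb).map_eq_zero_iff]
  exact hy

end main

theorem stmt_7 {B : Type*} [TopologicalSpace B] (F : Type*) [NormedAddCommGroup F]
    [NormedSpace ℝ F] (E : B → Type*) [∀ b, AddCommGroup (E b)] [∀ b, Module ℝ (E b)]
    [∀ b, TopologicalSpace (E b)] [TopologicalSpace (TotalSpace F E)]
    [FiberBundle F E] [VectorBundle ℝ F E] :
    let FP : Set (TotalSpace F E × TotalSpace F E) :=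
      {p | p.1.proj = p.2.proj ∧ p.2.snd ≠ 0}
    let Bset : Set (TotalSpace F E × TotalSpace F E) :=
      {p | p.1.proj = p.2.proj ∧ p.2.snd ≠ 0 ∧ ∃ l : ℝ, 0 ≤ l ∧ HEq p.1.snd (l • p.2.snd)}
    let Φ : {v : TotalSpace F E // v.snd ≠ 0} × {l : ℝ // 0 ≤ l} →
        TotalSpace F E × TotalSpace F E :=
      fun q => (TotalSpace.mk (q.1 : TotalSpace F E).proj
        ((q.2 : ℝ) • (q.1 : TotalSpace F E).snd), (q.1 : TotalSpace F E))
    IsClosed {p : FP | (p : TotalSpace F E × TotalSpace F E) ∈ Bset} ∧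
      IsEmbedding Φ ∧ Set.range Φ = Bset := by
  intro FP Bset Φ
  -- membership characterization over a common base point
  have hBmk : ∀ (b : B) (x y : E b),
      ((⟨b, x⟩, ⟨b, y⟩) : TotalSpace F E × TotalSpace F E) ∈ Bset ↔
        (y ≠ 0 ∧ ∃ l : ℝ, 0 ≤ l ∧ x = l • y) := by
    intro b x y
    constructor
    · rintro ⟨-, hy, l, hl, hx⟩; exact ⟨hy, l, hl, eq_of_heq hx⟩
    · rintro ⟨hy, l, hl, hx⟩; exact ⟨rfl, hy, l, hl, heq_of_eq hx⟩
  -- range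
  have hrange : Set.range Φ = Bset := by
    ext p
    constructor
    · rintro ⟨⟨⟨v, hv⟩, ⟨l, hl⟩⟩, rfl⟩
      exact ⟨rfl, hv, l, hl, HEq.rfl⟩
    · rintro ⟨hproj, hy, l, hl, hx⟩
      obtain ⟨⟨b₁, x⟩, ⟨b₂, y⟩⟩ := p
      dsimp only at hproj hy hx ⊢
      subst hproj
      have hx' := eq_of_heq hx
      rw [hx']
      exact ⟨(⟨⟨b₁, y⟩, hy⟩, ⟨l, hl⟩), rfl⟩
  -- closedness
  have hclosed : IsClosed {p : FP | (p : TotalSpace F E × TotalSpace F E) ∈ Bset} := by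
    rw [← isOpen_compl_iff, isOpen_iff_mem_nhds]
    rintro ⟨⟨⟨b₁, x⟩, ⟨b₂, y⟩⟩, hproj, hy⟩ hp
    dsimp only at hproj hy
    subst hproj
    simp only [Set.mem_compl_iff, Set.mem_setOf_eq, hBmk] at hp
    have hray : ¬ ∃ l : ℝ, 0 ≤ l ∧ x = l • y := fun h => hp ⟨hy, h⟩
    set e := trivializationAt F E b₁ with he
    have hb : b₁ ∈ e.baseSet := mem_baseSet_trivializationAt F E b₁
    have hsx : (⟨b₁, x⟩ : TotalSpace F E) ∈ e.source := e.mem_source.2 hb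
    have hsy : (⟨b₁, y⟩ : TotalSpace F E) ∈ e.source := e.mem_source.2 hb
    have hey0 : (e (⟨b₁, y⟩ : TotalSpace F E)).2 ≠ 0 := triv_snd_ne F E e hb hy
    -- the discriminating continuous function on FP
    have h1 : Continuous fun p : FP => (p : TotalSpace F E × TotalSpace F E).1 :=
      continuous_fst.comp continuous_subtype_val
    have h2 : Continuous fun p : FP => (p : TotalSpace F E × TotalSpace F E).2 :=
      continuous_snd.comp continuous_subtype_val
    set V : Set FP := {p | (p : TotalSpace F E × TotalSpace F E).1 ∈ e.source ∧
        (p : TotalSpace F E × TotalSpace F E).2 ∈ e.source} with hV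
    have hVopen : IsOpen V :=
      (e.open_source.preimage h1).inter (e.open_source.preimage h2)
    set g : FP → F × F := fun p =>
      (‖(e (p : TotalSpace F E × TotalSpace F E).2).2‖ •
          (e (p : TotalSpace F E × TotalSpace F E).1).2,
        ‖(e (p : TotalSpace F E × TotalSpace F E).1).2‖ •
          (e (p : TotalSpace F E × TotalSpace F E).2).2) with hg
    have hgc : ContinuousOn g V := by
      have c1 : ContinuousOn (fun p : FP => (e (p : TotalSpace F E × TotalSpace F E).1).2) V := by
        refine ContinuousOn.snd ?_
        exact (e.continuousOn.comp h1.continuousOn (fun p hp => hp.1))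
      have c2 : ContinuousOn (fun p : FP => (e (p : TotalSpace F E × TotalSpace F E).2).2) V := by
        refine ContinuousOn.snd ?_
        exact (e.continuousOn.comp h2.continuousOn (fun p hp => hp.2))
      exact ((c2.norm.smul c1).prodMk (c1.norm.smul c2))
    set W : Set FP := V ∩ g ⁻¹' (Set.diagonal F)ᶜ with hW
    have hWopen : IsOpen W :=
      hgc.isOpen_inter_preimage hVopen isClosed_diagonal.isOpen_compl
    have hmemW : (⟨(⟨b₁, x⟩, ⟨b₁, y⟩), rfl, hy⟩ : FP) ∈ W := by
      refine ⟨⟨hsx, hsy⟩, ?_⟩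
      intro hd
      apply hray
      rw [ray_iff F E e hb x y]
      exact (aux_norm_char hey0).2 hd
    refine Filter.mem_of_superset (hWopen.mem_nhds hmemW) ?_
    rintro ⟨⟨⟨c₁, u⟩, ⟨c₂, w⟩⟩, qproj, qw⟩ ⟨⟨hqx, hqy⟩, hqd⟩
    dsimp only at qproj qw
    subst qproj
    simp only [Set.mem_compl_iff, Set.mem_setOf_eq]
    intro hqB
    rw [hBmk] at hqB
    obtain ⟨-, l, hl, hx⟩ := hqB
    have hcb : c₁ ∈ e.baseSet := e.mem_source.1 hqy
    have hw0 : (e (⟨c₁, w⟩ : TotalSpace F E)).2 ≠ 0 := triv_snd_ne F E e hcb qw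
    have hex : ∃ l : ℝ, 0 ≤ l ∧
        (e (⟨c₁, u⟩ : TotalSpace F E)).2 = l • (e (⟨c₁, w⟩ : TotalSpace F E)).2 :=
      (ray_iff F E e hcb u w).1 ⟨l, hl, hx⟩
    exact hqd (Set.mem_diagonal_iff.2 ((aux_norm_char hw0).1 hex))
  -- continuity of Φ
  have h1 : Continuous fun q : {v : TotalSpace F E // v.snd ≠ 0} × {l : ℝ // 0 ≤ l} =>
      (q.1 : TotalSpace F E) := continuous_subtype_val.comp continuous_fst
  have h2 : Continuous fun q : {v : TotalSpace F E // v.snd ≠ 0} × {l : ℝ // 0 ≤ l} =>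
      (q.2 : ℝ) := continuous_subtype_val.comp continuous_snd
  have hΦc : Continuous Φ :=
    ((continuous_smul_ts F E).comp (h2.prodMk h1)).prodMk h1
  have hΦmem : ∀ q, Φ q ∈ Bset := fun q => hrange ▸ Set.mem_range_self q
  set Φ' : {v : TotalSpace F E // v.snd ≠ 0} × {l : ℝ // 0 ≤ l} → Bset :=
    fun q => ⟨Φ q, hΦmem q⟩ with hΦ'
  have hΦ'c : Continuous Φ' := hΦc.subtype_mk _
  -- the scalar function on Bset
  set lsc : Bset → ℝ := fun p =>
    ‖(trivializationAt F E (p : TotalSpace F E × TotalSpace F E).2.proj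
        (p : TotalSpace F E × TotalSpace F E).1).2‖ /
      ‖(trivializationAt F E (p : TotalSpace F E × TotalSpace F E).2.proj
        (p : TotalSpace F E × TotalSpace F E).2).2‖ with hlsc
  have hv1 : Continuous fun p : Bset => (p : TotalSpace F E × TotalSpace F E).1 :=
    continuous_fst.comp continuous_subtype_val
  have hv2 : Continuous fun p : Bset => (p : TotalSpace F E × TotalSpace F E).2 :=
    continuous_snd.comp continuous_subtype_val
  have hlscc : Continuous lsc := by
    rw [continuous_iff_continuousAt]
    intro p₀
    set e := trivializationAt F E (p₀ : TotalSpace F E × TotalSpace F E).2.proj with he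
    have hb0 : (p₀ : TotalSpace F E × TotalSpace F E).2.proj ∈ e.baseSet :=
      mem_baseSet_trivializationAt F E _
    have hs2 : (p₀ : TotalSpace F E × TotalSpace F E).2 ∈ e.source := e.mem_source.2 hb0
    have hs1 : (p₀ : TotalSpace F E × TotalSpace F E).1 ∈ e.source :=
      e.mem_source.2 (by rw [p₀.prop.1]; exact hb0)
    set V : Set Bset := {p | (p : TotalSpace F E × TotalSpace F E).1 ∈ e.source ∧
        (p : TotalSpace F E × TotalSpace F E).2 ∈ e.source} with hV
    have hVopen : IsOpen V := (e.open_source.preimage hv1).inter (e.open_source.preimage hv2)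
    have hVmem : V ∈ nhds p₀ := hVopen.mem_nhds ⟨hs1, hs2⟩
    have hgc : ContinuousAt (fun p : Bset =>
        ‖(e (p : TotalSpace F E × TotalSpace F E).1).2‖ /
          ‖(e (p : TotalSpace F E × TotalSpace F E).2).2‖) p₀ := by
      have ce1 : ContinuousAt (⇑e) ((p₀ : TotalSpace F E × TotalSpace F E).1) :=
        e.continuousOn.continuousAt (e.open_source.mem_nhds hs1)
      have ce2 : ContinuousAt (⇑e) ((p₀ : TotalSpace F E × TotalSpace F E).2) :=
        e.continuousOn.continuousAt (e.open_source.mem_nhds hs2)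
      have c1' : ContinuousAt (fun p : Bset =>
          e (p : TotalSpace F E × TotalSpace F E).1) p₀ := ContinuousAt.comp (x := p₀) ce1 hv1.continuousAt
      have c2' : ContinuousAt (fun p : Bset =>
          e (p : TotalSpace F E × TotalSpace F E).2) p₀ := ContinuousAt.comp (x := p₀) ce2 hv2.continuousAt
      have c1 : ContinuousAt (fun p : Bset =>
          (e (p : TotalSpace F E × TotalSpace F E).1).2) p₀ := c1'.snd
      have c2 : ContinuousAt (fun p : Bset =>
          (e (p : TotalSpace F E × TotalSpace F E).2).2) p₀ := c2'.snd
      refine c1.norm.div c2.norm ?_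
      exact norm_ne_zero_iff.2 (triv_snd_ne F E e hb0 p₀.prop.2.1)
    refine hgc.congr ?_
    filter_upwards [hVmem] with p hp
    obtain ⟨⟨⟨c₁, u⟩, ⟨c₂, w⟩⟩, hproj, hw, l, hl, hx⟩ := p
    dsimp only at hproj hw hx
    subst hproj
    have hx' := eq_of_heq hx
    obtain ⟨hp1, hp2⟩ := hp
    have hcb : c₁ ∈ e.baseSet := e.mem_source.1 hp2
    have e1 := lfix_spec F E e hcb hw hl hx'
    have e2 := lfix_spec F E (trivializationAt F E c₁)
      (mem_baseSet_trivializationAt F E c₁) hw hl hx'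
    exact e1.trans e2.symm
  set Ψ : Bset → {v : TotalSpace F E // v.snd ≠ 0} × {l : ℝ // 0 ≤ l} := fun p =>
    (⟨(p : TotalSpace F E × TotalSpace F E).2, p.prop.2.1⟩,
      ⟨lsc p, div_nonneg (norm_nonneg _) (norm_nonneg _)⟩) with hΨ
  have hΨc : Continuous Ψ := (hv2.subtype_mk _).prodMk (hlscc.subtype_mk _)
  have hleft : Function.LeftInverse Ψ Φ' := by
    rintro ⟨⟨v, hv⟩, ⟨l, hl⟩⟩
    refine Prod.ext (Subtype.ext rfl) (Subtype.ext ?_)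
    exact lfix_spec F E (trivializationAt F E v.proj)
      (mem_baseSet_trivializationAt F E v.proj) hv hl rfl
  have hΦ'emb : IsEmbedding Φ' := hleft.isEmbedding hΨc hΦ'c
  have hΦemb : IsEmbedding Φ := IsEmbedding.subtypeVal.comp hΦ'emb
  exact ⟨hclosed, hΦemb, hrange⟩
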